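/- Let λ : ℕ → ℝ be nonnegative with limsup_{i→∞} λ_i · (log log i)/i = 0. Then limsup_{d→∞} (log log d / log d) ∑_{i=1}^d λ_i/i² = 0. -/

import Mathlib

open Filter Real

private lemma aexp_one_le_loglog {i : ℕ} (hi : 16 ≤ i) : 1 ≤ Real.log (Real.log i) := by
  have h2 : (0.6931471803:ℝ) < Real.log 2 := Real.log_two_gt_d9
  have h16 : Real.log 16 = 4 * Real.log 2 := by
    rw [show (16:ℝ) = 2^4 by norm_num, Real.log_pow]; push_cast; ring
  have he : Real.exp 1 ≤ Real.log 16 := by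
    have := Real.exp_one_lt_d9; nlinarith
  calc (1:ℝ) = Real.log (Real.exp 1) := (Real.log_exp 1).symm
    _ ≤ Real.log (Real.log 16) := Real.log_le_log (Real.exp_pos 1) he
    _ ≤ Real.log (Real.log i) := by
        apply Real.log_le_log (by nlinarith)
        apply Real.log_le_log (by norm_num)
        exact_mod_cast hi

private lemma aexp_hlog : Tendsto (fun d : ℕ => Real.log d) atTop atTop :=
  Real.tendsto_log_atTop.comp tendsto_natCast_atTop_atTop

private lemma aexp_hloglog : Tendsto (fun d : ℕ => Real.log (Real.log d)) atTop atTop :=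
  Real.tendsto_log_atTop.comp aexp_hlog

private lemma aexp_h0 : Tendsto (fun y : ℝ => Real.log y / y) atTop (nhds 0) :=
  Real.isLittleO_log_id_atTop.tendsto_div_nhds_zero

private lemma aexp_hL : Tendsto (fun d : ℕ => Real.log (Real.log d) / Real.log d)
    atTop (nhds 0) := aexp_h0.comp aexp_hlog

private lemma aexp_harmonic {s : Finset ℕ} {n : ℕ} (hs : s ⊆ Finset.Icc 1 n) :
    ∑ i ∈ s, 1 / (i:ℝ) ≤ 1 + Real.log n := by
  have h1 : ∑ i ∈ s, 1 / (i:ℝ) ≤ ∑ i ∈ Finset.Icc 1 n, 1 / (i:ℝ) := by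
    apply Finset.sum_le_sum_of_subset_of_nonneg hs
    intro i _ _; positivity
  have h2 : (harmonic n : ℝ) = ∑ i ∈ Finset.Icc 1 n, 1 / (i:ℝ) := by
    rw [harmonic_eq_sum_Icc]; push_cast; simp [one_div]
  have h3 := harmonic_le_one_add_log n
  rw [h2] at h3
  linarith

/-- Key bound: (log log d / log d) ∑_{i=16}^d 1/(i log log i) ≤ 5 eventually. -/
private lemma aexp_key : ∀ᶠ d : ℕ in atTop,
    (Real.log (Real.log d) / Real.log d) *
      ∑ i ∈ Finset.Icc 16 d, 1 / ((i:ℝ) * Real.log (Real.log i)) ≤ 5 := by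
  have hLL : Tendsto (fun d : ℕ => Real.log (Real.log (Real.log d)) / Real.log (Real.log d))
      atTop (nhds 0) := aexp_h0.comp aexp_hloglog
  filter_upwards [eventually_ge_atTop 16, aexp_hlog.eventually_ge_atTop 2,
    aexp_hloglog.eventually_ge_atTop 1,
    aexp_hL.eventually (gt_mem_nhds (by norm_num : (0:ℝ) < 1/3)),
    hLL.eventually (gt_mem_nhds (by norm_num : (0:ℝ) < 1/2))] with d hd16 ha2 hb1 hr13 hr12
  set a := Real.log d with ha_def
  set b := Real.log (Real.log d) with hb_def
  have ha0 : (0:ℝ) < a := by linarith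
  have hb0 : (0:ℝ) < b := by linarith
  have hr13' : b / a < 1/3 := hr13
  have hr12' : Real.log b / b < 1/2 := hr12
  have hba3 : 3 * b < a := by
    have := (div_lt_iff₀ ha0).1 hr13'
    linarith
  have hba : b ≤ a := by linarith
  have hlb : Real.log b ≤ b / 2 := by
    have := (div_lt_iff₀ hb0).1 hr12'
    linarith
  set x := Real.exp (a / b) with hx_def
  set m := ⌊x⌋₊ with hm_def
  have hab3 : (3:ℝ) ≤ a / b := by rw [le_div_iff₀ hb0]; nlinarith
  have hlog16 : Real.log 16 ≤ 3 := by
    have h2 : Real.log 16 = 4 * Real.log 2 := by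
      rw [show (16:ℝ) = 2^4 by norm_num, Real.log_pow]; push_cast; ring
    have := Real.log_two_lt_d9; nlinarith
  have hx16 : (16:ℝ) ≤ x := by
    calc (16:ℝ) = Real.exp (Real.log 16) := (Real.exp_log (by norm_num)).symm
      _ ≤ x := Real.exp_le_exp.2 (by linarith)
  have hx0 : (0:ℝ) < x := by linarith
  have hm16 : 16 ≤ m := Nat.le_floor (by exact_mod_cast hx16)
  have hd0 : (0:ℝ) < (d:ℝ) := by
    have : (16:ℝ) ≤ (d:ℝ) := by exact_mod_cast hd16
    linarith
  have hxd : x ≤ (d:ℝ) := by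
    have h1 : a / b ≤ a := by rw [div_le_iff₀ hb0]; nlinarith
    calc x ≤ Real.exp a := Real.exp_le_exp.2 h1
      _ = d := by rw [ha_def, Real.exp_log hd0]
  have hmd : m ≤ d := by
    have : (m:ℝ) ≤ (d:ℝ) := le_trans (Nat.floor_le hx0.le) hxd
    exact_mod_cast this
  have hlogm : Real.log m ≤ a / b := by
    calc Real.log m ≤ Real.log x :=
        Real.log_le_log (by exact_mod_cast (by omega : 0 < m)) (Nat.floor_le hx0.le)
      _ = a / b := Real.log_exp _
  have hlogm1 : a / b ≤ Real.log ((m:ℕ) + 1 : ℕ) := by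
    have hx1 : x ≤ ((m:ℝ) + 1) := (Nat.lt_floor_add_one x).le
    calc a / b = Real.log x := (Real.log_exp _).symm
      _ ≤ Real.log ((m:ℕ) + 1 : ℕ) := by
          apply Real.log_le_log hx0
          push_cast; linarith
  -- split the sum
  have hsplit : ∑ i ∈ Finset.Icc 16 d, 1 / ((i:ℝ) * Real.log (Real.log i)) =
      (∑ i ∈ Finset.Ioc 15 m, 1 / ((i:ℝ) * Real.log (Real.log i))) +
      ∑ i ∈ Finset.Ioc m d, 1 / ((i:ℝ) * Real.log (Real.log i)) := by
    rw [show Finset.Icc 16 d = Finset.Ioc 15 d from Finset.Icc_add_one_left_eq_Ioc 15 d,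
      Finset.sum_Ioc_consecutive _ (by omega : 15 ≤ m) hmd]
  -- first block
  have hB1 : ∑ i ∈ Finset.Ioc 15 m, 1 / ((i:ℝ) * Real.log (Real.log i)) ≤ 1 + a / b := by
    have step : ∑ i ∈ Finset.Ioc 15 m, 1 / ((i:ℝ) * Real.log (Real.log i)) ≤
        ∑ i ∈ Finset.Ioc 15 m, 1 / (i:ℝ) := by
      apply Finset.sum_le_sum
      intro i hi
      rw [Finset.mem_Ioc] at hi
      have hu : 1 ≤ Real.log (Real.log i) := aexp_one_le_loglog hi.1
      have hi0 : (0:ℝ) < (i:ℝ) := by exact_mod_cast (by omega : 0 < i)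
      apply one_div_le_one_div_of_le hi0
      nlinarith
    have step2 : ∑ i ∈ Finset.Ioc 15 m, 1 / (i:ℝ) ≤ 1 + Real.log m := by
      apply aexp_harmonic
      intro i hi; rw [Finset.mem_Ioc] at hi; rw [Finset.mem_Icc]; omega
    linarith
  -- second block
  have hB2 : ∑ i ∈ Finset.Ioc m d, 1 / ((i:ℝ) * Real.log (Real.log i)) ≤
      2 / b * (1 + a) := by
    have step : ∑ i ∈ Finset.Ioc m d, 1 / ((i:ℝ) * Real.log (Real.log i)) ≤
        ∑ i ∈ Finset.Ioc m d, 2 / b * (1 / (i:ℝ)) := by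
      apply Finset.sum_le_sum
      intro i hi
      rw [Finset.mem_Ioc] at hi
      have hi16 : 16 ≤ i := by omega
      have hi0 : (0:ℝ) < (i:ℝ) := by exact_mod_cast (by omega : 0 < i)
      have hli : a / b ≤ Real.log i := by
        refine hlogm1.trans (Real.log_le_log ?_ ?_)
        · exact_mod_cast (by omega : 0 < m + 1)
        · exact_mod_cast (by omega : m + 1 ≤ i)
      have hlli : b / 2 ≤ Real.log (Real.log i) := by
        have h1 : Real.log (a / b) ≤ Real.log (Real.log i) :=
          Real.log_le_log (by positivity) hli
        have h2 : Real.log (a / b) = Real.log a - Real.log b :=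
          Real.log_div ha0.ne' hb0.ne'
        have h3 : Real.log a = b := by rw [ha_def, hb_def]
        rw [h2, h3] at h1
        linarith
      rw [show 2 / b * (1 / (i:ℝ)) = 1 / ((i:ℝ) * (b / 2)) by field_simp]
      exact one_div_le_one_div_of_le (mul_pos hi0 (by linarith : (0:ℝ) < b/2))
        (mul_le_mul_of_nonneg_left hlli hi0.le)
    have step2 : ∑ i ∈ Finset.Ioc m d, 1 / (i:ℝ) ≤ 1 + a := by
      apply aexp_harmonic
      intro i hi; rw [Finset.mem_Ioc] at hi; rw [Finset.mem_Icc]; omega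
    rw [← Finset.mul_sum] at step
    calc ∑ i ∈ Finset.Ioc m d, 1 / ((i:ℝ) * Real.log (Real.log i)) ≤
        2 / b * ∑ i ∈ Finset.Ioc m d, 1 / (i:ℝ) := step
      _ ≤ 2 / b * (1 + a) := mul_le_mul_of_nonneg_left step2 (by positivity)
  -- combine
  rw [hsplit]
  have hfin : (b / a) * ((1 + a / b) + 2 / b * (1 + a)) ≤ 5 := by
    have e1 : b / a ≤ 1 := by rw [div_le_one ha0]; exact hba
    have e2 : 2 / a ≤ 1 := by rw [div_le_one ha0]; linarith
    have heq : (b / a) * ((1 + a / b) + 2 / b * (1 + a)) = b / a + 1 + 2 / a + 2 := by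
      field_simp; ring
    rw [heq]; linarith
  calc (b / a) * ((∑ i ∈ Finset.Ioc 15 m, 1 / ((i:ℝ) * Real.log (Real.log i))) +
        ∑ i ∈ Finset.Ioc m d, 1 / ((i:ℝ) * Real.log (Real.log i)))
      ≤ (b / a) * ((1 + a / b) + 2 / b * (1 + a)) :=
        mul_le_mul_of_nonneg_left (add_le_add hB1 hB2) (by positivity)
    _ ≤ 5 := hfin

/-- If λᵢ (log log i)/i → 0 (λ nonnegative), then
(log log d / log d) ∑_{i=1}^d λᵢ/i² → 0. -/
theorem aexp_condition (lam : ℕ → ℝ) (hnonneg : ∀ i, 0 ≤ lam i)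
    (h : Tendsto (fun i : ℕ => lam i * Real.log (Real.log i) / i) atTop (nhds 0)) :
    Tendsto (fun d : ℕ =>
      (Real.log (Real.log d) / Real.log d) *
        ∑ i ∈ Finset.Icc 1 d, lam i / (i : ℝ) ^ 2) atTop (nhds 0) := by
  rw [NormedAddCommGroup.tendsto_nhds_zero]
  intro ε hε
  have hε20 : (0:ℝ) < ε / 20 := by linarith
  obtain ⟨N0, hN0⟩ := eventually_atTop.1 ((NormedAddCommGroup.tendsto_nhds_zero.1 h) (ε/20) hε20)
  set N := max N0 16 with hNdef
  have hN16 : 16 ≤ N := le_max_right _ _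
  set A := ∑ i ∈ Finset.Icc 1 (N-1), lam i / (i:ℝ)^2 with hAdef
  have hLA : Tendsto (fun d : ℕ => (Real.log (Real.log d) / Real.log d) * A)
      atTop (nhds 0) := by simpa using aexp_hL.mul_const A
  filter_upwards [aexp_key, eventually_ge_atTop N,
    aexp_hlog.eventually_ge_atTop 1, aexp_hloglog.eventually_ge_atTop 0,
    hLA.eventually (gt_mem_nhds (by linarith : (0:ℝ) < ε/4))] with d hkey hdN hla hlb hLA'
  have hd16 : 16 ≤ d := le_trans hN16 hdN
  set l := Real.log (Real.log d) / Real.log d with hldef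
  have hl0 : 0 ≤ l := div_nonneg hlb (by linarith)
  -- split the sum at N
  have hsplit : ∑ i ∈ Finset.Icc 1 d, lam i / (i:ℝ)^2 =
      A + ∑ i ∈ Finset.Icc N d, lam i / (i:ℝ)^2 := by
    have h1 : Finset.Icc 1 d = Finset.Ioc 0 d := Finset.Icc_add_one_left_eq_Ioc 0 d
    have h2 : Finset.Icc 1 (N-1) = Finset.Ioc 0 (N-1) := Finset.Icc_add_one_left_eq_Ioc 0 (N-1)
    have h3 : Finset.Icc N d = Finset.Ioc (N-1) d := by
      rw [← Finset.Icc_add_one_left_eq_Ioc (N-1) d]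
      congr 1
      omega
    rw [hAdef, h1, h2, h3,
      Finset.sum_Ioc_consecutive _ (by omega : 0 ≤ N-1) (by omega : N-1 ≤ d)]
  -- termwise bound on the tail
  have hterm : ∀ i ∈ Finset.Icc N d,
      lam i / (i:ℝ)^2 ≤ ε/20 * (1 / ((i:ℝ) * Real.log (Real.log i))) := by
    intro i hi
    rw [Finset.mem_Icc] at hi
    have hi16 : 16 ≤ i := le_trans hN16 hi.1
    have hu : 1 ≤ Real.log (Real.log i) := aexp_one_le_loglog hi16
    have hu0 : Real.log (Real.log i) ≠ 0 := by linarith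
    have hi0 : (0:ℝ) < (i:ℝ) := by exact_mod_cast (by omega : 0 < i)
    have hb := hN0 i (le_trans (le_max_left _ _) hi.1)
    rw [Real.norm_eq_abs] at hb
    have h1 : lam i * Real.log (Real.log i) / i ≤ ε/20 := (le_abs_self _).trans hb.le
    have heq : lam i / (i:ℝ)^2 =
        (lam i * Real.log (Real.log i) / i) * (1 / ((i:ℝ) * Real.log (Real.log i))) := by
      field_simp
    rw [heq]
    exact mul_le_mul_of_nonneg_right h1 (by positivity)
  have hgnn : ∀ i ∈ Finset.Icc 16 d, 0 ≤ 1 / ((i:ℝ) * Real.log (Real.log i)) := by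
    intro i hi
    rw [Finset.mem_Icc] at hi
    have hu : 1 ≤ Real.log (Real.log i) := aexp_one_le_loglog hi.1
    have hi0 : (0:ℝ) < (i:ℝ) := by exact_mod_cast (by omega : 0 < i)
    have : 0 ≤ (i:ℝ) * Real.log (Real.log i) := by nlinarith
    positivity
  have hsum2 : ∑ i ∈ Finset.Icc N d, lam i / (i:ℝ)^2 ≤
      ε/20 * ∑ i ∈ Finset.Icc 16 d, 1 / ((i:ℝ) * Real.log (Real.log i)) := by
    calc ∑ i ∈ Finset.Icc N d, lam i / (i:ℝ)^2
        ≤ ∑ i ∈ Finset.Icc N d, ε/20 * (1 / ((i:ℝ) * Real.log (Real.log i))) :=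
          Finset.sum_le_sum hterm
      _ ≤ ∑ i ∈ Finset.Icc 16 d, ε/20 * (1 / ((i:ℝ) * Real.log (Real.log i))) := by
          apply Finset.sum_le_sum_of_subset_of_nonneg
            (Finset.Icc_subset_Icc_left hN16)
          intro i hi _
          exact mul_nonneg hε20.le (hgnn i hi)
      _ = ε/20 * ∑ i ∈ Finset.Icc 16 d, 1 / ((i:ℝ) * Real.log (Real.log i)) :=
          (Finset.mul_sum _ _ _).symm
  have hS0 : 0 ≤ ∑ i ∈ Finset.Icc 1 d, lam i / (i:ℝ)^2 := by
    apply Finset.sum_nonneg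
    intro i _
    have := hnonneg i
    positivity
  have hA0 : 0 ≤ A := by
    rw [hAdef]
    apply Finset.sum_nonneg
    intro i _
    have := hnonneg i
    positivity
  rw [Real.norm_eq_abs, abs_of_nonneg (mul_nonneg hl0 hS0)]
  calc l * ∑ i ∈ Finset.Icc 1 d, lam i / (i:ℝ)^2
      = l * A + l * ∑ i ∈ Finset.Icc N d, lam i / (i:ℝ)^2 := by rw [hsplit]; ring
    _ ≤ l * A + l * (ε/20 * ∑ i ∈ Finset.Icc 16 d, 1 / ((i:ℝ) * Real.log (Real.log i))) :=
        add_le_add_right (mul_le_mul_of_nonneg_left hsum2 hl0) _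
    _ = l * A + ε/20 * (l * ∑ i ∈ Finset.Icc 16 d, 1 / ((i:ℝ) * Real.log (Real.log i))) := by
        ring
    _ ≤ ε/4 + ε/20 * 5 := add_le_add hLA'.le (mul_le_mul_of_nonneg_left hkey hε20.le)
    _ < ε := by linarith
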